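/- arXiv:1807.08046 — 5 statements merged into one kernel-verified Lean document; each statement's English description precedes it below -/
import Mathlib

section
/- Let ψ(x) = ½‖x‖² on ℝⁿ. Suppose x_{t-1}, x_t, y_{t-1} ∈ ℝⁿ satisfy ψ(x_t) ≥ ψ(x_{t-1}) and ⟨∇ψ(x_{t-1}), x_t − x_{t-1}⟩ ≥ 0. Let α ∈ (0,1], set y_t = α x_t + (1−α) y_{t-1}, and define Δ_{t-1} = ψ(y_{t-1}) − ψ(x_{t-1}), Δ_t = ψ(y_t) − ψ(x_t), β = α/(1+α). Then Δ_t ≤ ((1−2β)/(1−β)) · [ Δ_{t-1} − ((1−β)/β²)·½‖y_t − β x_{t-1} − (1−β) y_{t-1}‖² − β·½‖x_{t-1} − y_{t-1}‖² ]. -/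
/-- Lemma 1 (gap bound for BlitzMN line search) for ψ(x) = ½‖x‖². -/
theorem stmt_0 {n : ℕ} (xtm xt ytm yt : EuclideanSpace ℝ (Fin n)) (α β : ℝ)
    (hα0 : 0 < α) (hα1 : α ≤ 1)
    (hyt : yt = α • xt + (1 - α) • ytm)
    (hβ : β = α / (1 + α))
    (hmono : (1/2) * ‖xtm‖^2 ≤ (1/2) * ‖xt‖^2)
    (hgrad : 0 ≤ (inner ℝ xtm (xt - xtm) : ℝ)) :
    (1/2) * ‖yt‖^2 - (1/2) * ‖xt‖^2 ≤
      (1 - 2*β)/(1 - β) *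
        (((1/2) * ‖ytm‖^2 - (1/2) * ‖xtm‖^2)
          - (1 - β)/β^2 * ((1/2) * ‖yt - β • xtm - (1 - β) • ytm‖^2)
          - β * ((1/2) * ‖xtm - ytm‖^2)) := by
  have h1α : (0:ℝ) < 1 + α := by linarith
  subst hyt hβ
  simp only [← real_inner_self_eq_norm_sq, inner_add_left, inner_add_right,
    inner_sub_left, inner_sub_right, real_inner_smul_left, real_inner_smul_right] at *
  have hb1 : 1 - α / (1 + α) = 1 / (1 + α) := by field_simp; ring
  have hb2 : (1 - 2 * (α / (1 + α))) / (1 - α / (1 + α)) = 1 - α := by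
    rw [hb1]; field_simp; ring
  have hb3 : (1 - α / (1 + α)) / (α / (1 + α)) ^ 2 = (1 + α) / α ^ 2 := by
    rw [hb1]; field_simp
  rw [hb2, hb3, ← sub_nonneg]
  have h1 : 0 ≤ 1 - α := by linarith
  have key := mul_nonneg h1 hgrad
  convert key using 1
  rfl
  simp only [real_inner_comm ytm xt, real_inner_comm ytm xtm, real_inner_comm xt xtm]
  field_simp
  ring
end

section
/- Let f : ℝⁿ → ℝ be 1-strongly convex with minimizer x⋆. Let f₀ : ℝⁿ → ℝ be 1-strongly convex with f₀(x) ≤ f(x) for all x, and let x₀ be the minimizer of f₀. Then for any y₀ ∈ ℝⁿ, setting Δ₀ = f(y₀) − f₀(x₀), one has ‖x⋆ − ½(x₀ + y₀)‖² ≤ Δ₀ − ¼‖x₀ − y₀‖²; in particular x⋆ lies in the closed ball of center ½(x₀+y₀) and radius √(Δ₀ − ¼‖x₀ − y₀‖²). -/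
open scoped RealInnerProductSpace

lemma strong_min_aux {n : ℕ} (f : EuclideanSpace ℝ (Fin n) → ℝ)
    (hf : ConvexOn ℝ Set.univ (fun x => f x - ‖x‖^2 / 2))
    (z : EuclideanSpace ℝ (Fin n)) (hz : ∀ x, f z ≤ f x)
    (x : EuclideanSpace ℝ (Fin n)) :
    f z + ‖x - z‖^2 / 2 ≤ f x := by
  have key : ∀ t : ℝ, 0 < t → t ≤ 1 → f z + (1 - t) * ‖x - z‖^2 / 2 ≤ f x := by
    intro t ht ht1
    have hcv := hf.2 (Set.mem_univ x) (Set.mem_univ z) ht.le (by linarith : (0:ℝ) ≤ 1 - t)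
      (by ring : t + (1 - t) = 1)
    simp only at hcv
    have hmin := hz (t • x + (1 - t) • z)
    have h1 : t • x + (1 - t) • z = z + t • (x - z) := by module
    have e1 : ‖z + t • (x - z)‖^2 = ‖z‖^2 + 2 * (t * ⟪z, x - z⟫) + t^2 * ‖x - z‖^2 := by
      rw [@norm_add_sq_real, real_inner_smul_right, norm_smul]
      simp [mul_pow, sq_abs]
      try ring
    have e2 : ‖x‖^2 = ‖z‖^2 + 2 * ⟪z, x - z⟫ + ‖x - z‖^2 := by
      have : x = z + (x - z) := by abel
      nth_rewrite 1 [this]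
      rw [@norm_add_sq_real]
    rw [h1] at hcv hmin
    simp only [smul_eq_mul] at hcv
    rw [e1, e2] at hcv
    nlinarith [sq_nonneg (1 - t), sq_nonneg t, norm_nonneg (x - z)]
  by_cases hC : ‖x - z‖^2 = 0
  · rw [hC]; simpa using hz x
  · have hCpos : 0 < ‖x - z‖^2 := lt_of_le_of_ne (by positivity) (Ne.symm hC)
    refine le_of_forall_pos_le_add ?_
    intro ε hε
    set t := min 1 (2 * ε / ‖x - z‖^2) with htdef
    have ht : 0 < t := lt_min one_pos (by positivity)
    have hk := key t ht (min_le_left _ _)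
    have hsmall : t * ‖x - z‖^2 / 2 ≤ ε := by
      have h2 : t ≤ 2 * ε / ‖x - z‖^2 := min_le_right _ _
      rw [le_div_iff₀ hCpos] at h2
      linarith
    nlinarith

/-- The minimizer of a 1-strongly convex function lies in the safe ball. -/
theorem stmt_2 {n : ℕ} (f f0 : EuclideanSpace ℝ (Fin n) → ℝ)
    (xstar x0 y0 : EuclideanSpace ℝ (Fin n))
    (hf : ConvexOn ℝ Set.univ (fun x => f x - ‖x‖^2 / 2))
    (hf0 : ConvexOn ℝ Set.univ (fun x => f0 x - ‖x‖^2 / 2))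
    (hxstar : ∀ x, f xstar ≤ f x)
    (hx0 : ∀ x, f0 x0 ≤ f0 x)
    (hle : ∀ x, f0 x ≤ f x) :
    ‖xstar - (1/2 : ℝ) • (x0 + y0)‖^2 ≤ (f y0 - f0 x0) - ‖x0 - y0‖^2 / 4 ∧
      xstar ∈ Metric.closedBall ((1/2 : ℝ) • (x0 + y0))
        (Real.sqrt ((f y0 - f0 x0) - ‖x0 - y0‖^2 / 4)) := by
  have h1 := strong_min_aux f0 hf0 x0 hx0 xstar
  have h2 := strong_min_aux f hf xstar hxstar y0
  have h3 := hle xstar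
  -- parallelogram identity
  have hpar : ‖(xstar - x0) + (y0 - xstar)‖^2 + ‖(xstar - x0) - (y0 - xstar)‖^2
      = 2 * ‖xstar - x0‖^2 + 2 * ‖y0 - xstar‖^2 := by
    have := parallelogram_law_with_norm ℝ (xstar - x0) (y0 - xstar)
    nlinarith [this]
  have hab : (xstar - x0) + (y0 - xstar) = y0 - x0 := by abel
  have hamb : (xstar - x0) - (y0 - xstar) = (2:ℝ) • (xstar - (1/2 : ℝ) • (x0 + y0)) := by
    module
  have h2n : ‖(2:ℝ) • (xstar - (1/2 : ℝ) • (x0 + y0))‖^2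
      = 4 * ‖xstar - (1/2 : ℝ) • (x0 + y0)‖^2 := by
    rw [norm_smul]
    simp
    ring
  rw [hab, hamb, h2n] at hpar
  have hyx : ‖y0 - x0‖ = ‖x0 - y0‖ := norm_sub_rev _ _
  have hmain : ‖xstar - (1/2 : ℝ) • (x0 + y0)‖^2 ≤ (f y0 - f0 x0) - ‖x0 - y0‖^2 / 4 := by
    rw [hyx] at hpar
    nlinarith
  refine ⟨hmain, ?_⟩
  rw [Metric.mem_closedBall, dist_eq_norm]
  have hR : 0 ≤ (f y0 - f0 x0) - ‖x0 - y0‖^2 / 4 := le_trans (by positivity) hmain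
  rw [show ((1:ℝ)/2) = (1/2 : ℝ) from rfl]
  exact (Real.le_sqrt (norm_nonneg _) hR).mpr hmain
end

section
/- Let f, f_S : ℝⁿ → ℝ ∪ {+∞} be convex lower semicontinuous 1-strongly convex functions with f(x) = f_S(x) for all x in an open ball S₁ that contains the minimizer x⋆ of f in its closure. Assume additionally that if x⋆ lies on the boundary of S₁ there is a point y₀ in the closure of S₁ with y₀ ≠ x⋆ and f(y₀) = f(x⋆) + ½‖y₀ − x⋆‖². Then x⋆ also minimizes f_S. -/
open Metric Filter Topology

variable {n : ℕ}

lemma sc_combo {f : EuclideanSpace ℝ (Fin n) → ℝ}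
    (hf : ConvexOn ℝ Set.univ (fun x => f x - ‖x‖^2/2))
    (x y : EuclideanSpace ℝ (Fin n)) {a b : ℝ} (ha : 0 ≤ a) (hb : 0 ≤ b) (hab : a + b = 1) :
    f (a • x + b • y) ≤ a * f x + b * f y - a*b*‖x-y‖^2/2 := by
  have h := hf.2 (Set.mem_univ x) (Set.mem_univ y) ha hb hab
  simp only [smul_eq_mul] at h
  have h3 : ‖a • x + b • y‖^2 = a*‖x‖^2 + b*‖y‖^2 - a*b*‖x-y‖^2 := by
    rw [norm_add_sq_real, norm_sub_sq_real, norm_smul, norm_smul,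
      real_inner_smul_left, real_inner_smul_right]
    simp only [Real.norm_eq_abs, abs_of_nonneg ha, abs_of_nonneg hb, mul_pow]
    linear_combination (a*‖x‖^2 + b*‖y‖^2) * hab
  rw [h3] at h
  nlinarith [h]

lemma sc_growth {f : EuclideanSpace ℝ (Fin n) → ℝ}
    (hf : ConvexOn ℝ Set.univ (fun x => f x - ‖x‖^2/2))
    {xstar : EuclideanSpace ℝ (Fin n)} (hmin : ∀ x, f xstar ≤ f x)
    (x : EuclideanSpace ℝ (Fin n)) :
    f xstar + ‖x - xstar‖^2/2 ≤ f x := by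
  have key : ∀ t : ℝ, 0 < t → t < 1 → f xstar + (1-t)*‖x-xstar‖^2/2 ≤ f x := by
    intro t ht ht1
    have h := sc_combo hf xstar x (by linarith : (0:ℝ) ≤ 1 - t) ht.le (by ring)
    rw [norm_sub_rev xstar x] at h
    have h2 := hmin ((1-t) • xstar + t • x)
    nlinarith [h, h2, ht]
  have htend : Filter.Tendsto (fun t : ℝ => f xstar + (1-t)*‖x-xstar‖^2/2)
      (nhdsWithin 0 (Set.Ioi 0)) (𝓝 (f xstar + ‖x-xstar‖^2/2)) := by
    have hc : Continuous (fun t : ℝ => f xstar + (1-t)*‖x-xstar‖^2/2) := by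
      continuity
    have h0 := (hc.tendsto 0).mono_left (nhdsWithin_le_nhds (s := Set.Ioi 0))
    simpa using h0
  refine le_of_tendsto htend ?_
  filter_upwards [Ioo_mem_nhdsGT_of_mem (by constructor <;> norm_num : (0:ℝ) ∈ Set.Ico 0 1)]
    with t ht
  exact key t ht.1 ht.2

lemma convex_localmin {g : EuclideanSpace ℝ (Fin n) → ℝ}
    (hg : ConvexOn ℝ Set.univ g) {z : EuclideanSpace ℝ (Fin n)} {r : ℝ} (hr : 0 < r)
    (hloc : ∀ w ∈ ball z r, g z ≤ g w) (x : EuclideanSpace ℝ (Fin n)) : g z ≤ g x := by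
  rcases eq_or_ne x z with h | h
  · rw [h]
  have hnx : 0 < ‖x - z‖ := by
    rw [norm_pos_iff]; exact sub_ne_zero_of_ne h
  set t : ℝ := min (1/2) (r / (2*‖x-z‖)) with htdef
  have ht0 : 0 < t := lt_min (by norm_num) (by positivity)
  have ht1 : t < 1 := lt_of_le_of_lt (min_le_left _ _) (by norm_num)
  have hc := hg.2 (Set.mem_univ z) (Set.mem_univ x) (by linarith : (0:ℝ) ≤ 1 - t) ht0.le (by ring)
  simp only [smul_eq_mul] at hc
  have hw : (1-t) • z + t • x ∈ ball z r := by
    rw [mem_ball, dist_eq_norm]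
    have he : (1-t) • z + t • x - z = t • (x - z) := by module
    rw [he, norm_smul, Real.norm_eq_abs, abs_of_nonneg ht0.le]
    have h2 : t * ‖x-z‖ ≤ r/2 := by
      calc t * ‖x-z‖ ≤ (r / (2*‖x-z‖)) * ‖x-z‖ :=
            mul_le_mul_of_nonneg_right (min_le_right _ _) (norm_nonneg _)
        _ = r/2 := by field_simp
    linarith
  have hl := hloc _ hw
  nlinarith [hl, hc, ht0]

set_option maxHeartbeats 1000000 in
/-- If a 1-strongly convex lsc function agrees with f on an open ball containing the
minimizer of f in its closure (with the tightness condition on the boundary), then the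
minimizer of f also minimizes the screened objective. -/
theorem stmt_3 {n : ℕ} (f fS : EuclideanSpace ℝ (Fin n) → ℝ)
    (c : EuclideanSpace ℝ (Fin n)) (R : ℝ) (xstar : EuclideanSpace ℝ (Fin n))
    (hf : ConvexOn ℝ Set.univ (fun x => f x - ‖x‖^2/2))
    (hfS : ConvexOn ℝ Set.univ (fun x => fS x - ‖x‖^2/2))
    (hlsc : LowerSemicontinuous f) (hlscS : LowerSemicontinuous fS)
    (heq : ∀ x ∈ Metric.ball c R, f x = fS x)
    (hmin : ∀ x, f xstar ≤ f x)
    (hcl : xstar ∈ closure (Metric.ball c R))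
    (hbd : xstar ∈ frontier (Metric.ball c R) →
      ∃ y0 ∈ closure (Metric.ball c R), y0 ≠ xstar ∧
        f y0 = f xstar + ‖y0 - xstar‖^2 / 2) :
    ∀ x, fS xstar ≤ fS x := by
  have hR : 0 < R := by
    rcases lt_or_ge 0 R with h | h
    · exact h
    · rw [Metric.ball_eq_empty.2 h] at hcl
      simp at hcl
  have hgrow := sc_growth hf hmin
  -- convexity of the tilted function
  have hGS : ConvexOn ℝ Set.univ (fun x => fS x - ‖x - xstar‖^2/2) := by
    have haff : ConvexOn ℝ Set.univ
        (fun x : EuclideanSpace ℝ (Fin n) => (inner ℝ x xstar : ℝ) - ‖xstar‖^2/2) := by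
      refine ⟨convex_univ, fun x _ y _ a b ha hb hab => le_of_eq ?_⟩
      simp only [inner_add_left, real_inner_smul_left, smul_eq_mul]
      linear_combination (‖xstar‖^2/2) * hab
    have := hfS.add haff
    convert this using 1
    case e'_10 => rfl
    funext x
    simp only [Pi.add_apply]
    have hns := norm_sub_sq_real x xstar
    linear_combination (-(1/2 : ℝ)) * hns
  -- find a good interior point z
  obtain ⟨z, hzball, hGz, hfSxle⟩ : ∃ z ∈ Metric.ball c R,
      f z - ‖z - xstar‖^2/2 ≤ f xstar ∧ fS xstar ≤ f xstar := by
    by_cases hx : xstar ∈ Metric.ball c R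
    · exact ⟨xstar, hx, by simp, le_of_eq (heq xstar hx).symm⟩
    · have hfr : xstar ∈ frontier (Metric.ball c R) := by
        rw [frontier, Metric.isOpen_ball.interior_eq]
        exact ⟨hcl, hx⟩
      obtain ⟨y0, hy0cl, hy0ne, hy0eq⟩ := hbd hfr
      rw [closure_ball c hR.ne'] at hcl hy0cl
      have hsc : StrictConvex ℝ (Metric.closedBall c R) := strictConvex_closedBall ℝ c R
      have hmem : ∀ t : ℝ, 0 < t → t < 1 →
          (1-t) • xstar + t • y0 ∈ Metric.ball c R := by
        intro t ht ht1
        have := hsc hcl hy0cl hy0ne.symm (by linarith : (0:ℝ) < 1 - t) ht (by ring)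
        rwa [interior_closedBall c hR.ne'] at this
      have hcombo : ∀ t : ℝ, 0 ≤ t → t ≤ 1 →
          f ((1-t) • xstar + t • y0) ≤ f xstar + t^2*‖y0-xstar‖^2/2 := by
        intro t ht ht1
        have h := sc_combo hf xstar y0 (by linarith : (0:ℝ) ≤ 1 - t) ht (by ring)
        rw [norm_sub_rev xstar y0] at h
        nlinarith [h, hy0eq]
      refine ⟨(1-(1/2:ℝ)) • xstar + (1/2:ℝ) • y0, hmem _ (by norm_num) (by norm_num),
        ?_, ?_⟩
      · have h1 := hcombo (1/2) (by norm_num) (by norm_num)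
        have h2 : (1-(1/2:ℝ)) • xstar + (1/2:ℝ) • y0 - xstar = (1/2:ℝ) • (y0 - xstar) := by
          module
        have h3 : ‖(1-(1/2:ℝ)) • xstar + (1/2:ℝ) • y0 - xstar‖^2 = (1/4)*‖y0-xstar‖^2 := by
          rw [h2, norm_smul, Real.norm_eq_abs, mul_pow,
            abs_of_nonneg (by norm_num : (0:ℝ) ≤ 1/2)]
          norm_num
        nlinarith [h1, h3]
      · -- lower semicontinuity argument : fS xstar ≤ f xstar
        by_contra hlt
        push_neg at hlt
        set y : ℝ := (f xstar + fS xstar)/2 with hy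
        have hylt : y < fS xstar := by rw [hy]; linarith
        have hev1 : ∀ᶠ x' in nhds xstar, y < fS x' := hlscS xstar y hylt
        have hcont : Continuous (fun t : ℝ => (1-t) • xstar + t • y0) := by continuity
        have hptend : Filter.Tendsto (fun t : ℝ => (1-t) • xstar + t • y0)
            (nhdsWithin 0 (Set.Ioi 0)) (nhds xstar) := by
          have h0 := (hcont.tendsto 0).mono_left (nhdsWithin_le_nhds (s := Set.Ioi 0))
          simpa using h0
        set m : ℝ := min 1 (((fS xstar - f xstar)/2) / (‖y0-xstar‖^2 + 1)) with hm
        have hm0 : 0 < m := lt_min one_pos (div_pos (by linarith) (by positivity))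
        have hev2 : ∀ᶠ t in nhdsWithin (0:ℝ) (Set.Ioi 0), t ∈ Set.Ioo 0 m :=
          Ioo_mem_nhdsGT_of_mem ⟨le_refl 0, hm0⟩
        obtain ⟨t, hty, htm⟩ := ((hptend.eventually hev1).and hev2).exists
        have htm1 : t < 1 := lt_of_lt_of_le htm.2 (min_le_left _ _)
        have hball := hmem t htm.1 htm1
        have hfval := hcombo t htm.1.le htm1.le
        rw [heq _ hball] at hfval
        -- t^2 * ‖y0-xstar‖^2 / 2 < (fS xstar - f xstar)/2
        have hsmall : t^2*‖y0-xstar‖^2/2 < (fS xstar - f xstar)/2 := by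
          have h4 : t < ((fS xstar - f xstar)/2) / (‖y0-xstar‖^2 + 1) :=
            lt_of_lt_of_le htm.2 (min_le_right _ _)
          have h5 : t * (‖y0-xstar‖^2 + 1) < (fS xstar - f xstar)/2 := by
            rw [lt_div_iff₀ (by positivity)] at h4
            exact h4
          have h6 : t^2 ≤ t := by nlinarith [htm.1, htm1]
          nlinarith [h5, h6, sq_nonneg ‖y0-xstar‖, htm.1]
        have hy' : y < fS ((1-t) • xstar + t • y0) := hty
        rw [hy] at hy'
        linarith [hfval, hsmall]
  -- local minimality of the tilted fS at z, then globalize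
  have hrpos : 0 < R - dist z c := by
    rw [Metric.mem_ball] at hzball; linarith
  have hloc : ∀ w ∈ Metric.ball z (R - dist z c),
      fS z - ‖z - xstar‖^2/2 ≤ fS w - ‖w - xstar‖^2/2 := by
    intro w hw
    have hwball : w ∈ Metric.ball c R := by
      rw [Metric.mem_ball] at *
      have := dist_triangle w z c
      linarith
    rw [← heq w hwball, ← heq z hzball]
    have h1 := hgrow w
    linarith [hGz]
  have hglob := convex_localmin hGS hrpos hloc
  intro x
  have h1 := hglob x
  have h2 := hgrow z
  have h3 := sq_nonneg ‖x - xstar‖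
  rw [← heq z hzball] at h1
  linarith [h1, h2, h3, hGz, hfSxle]
end

section
/- Fix x₀, y₀ ∈ ℝⁿ and Δ₀ > 0 with ‖x₀ − y₀‖² ≤ 2Δ₀. For β ∈ (0, ½) define τ(β) = 2β√(Δ₀ − ¼‖x₀ − y₀‖²) and the open ball B(β) with center β x₀ + (1−β) y₀ and radius τ(β). Then the union S = ⋃_{β∈(0,½)} B(β) equals the open ball S₁ = { x : ‖x − ½(x₀ + y₀)‖ < √(Δ₀ − ¼‖x₀ − y₀‖²) }. -/
/-- At ξ = 1 the union of equivalence balls equals the BlitzScreen safe ball. -/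
theorem stmt_5 {n : ℕ} (x0 y0 : EuclideanSpace ℝ (Fin n)) (Δ : ℝ)
    (hΔ : 0 < Δ) (hd : ‖x0 - y0‖^2 ≤ 2 * Δ) :
    (⋃ β ∈ Set.Ioo (0:ℝ) (1/2),
        Metric.ball (β • x0 + (1 - β) • y0) (2 * β * Real.sqrt (Δ - ‖x0 - y0‖^2/4)))
      = Metric.ball ((1/2 : ℝ) • (x0 + y0)) (Real.sqrt (Δ - ‖x0 - y0‖^2/4)) := by
  set r := Real.sqrt (Δ - ‖x0 - y0‖^2/4) with hrdef
  have hC : 0 < Δ - ‖x0 - y0‖^2/4 := by nlinarith [sq_nonneg ‖x0 - y0‖]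
  have hr : 0 < r := Real.sqrt_pos.mpr hC
  have hr2 : r^2 = Δ - ‖x0 - y0‖^2/4 := Real.sq_sqrt hC.le
  have hd2 : ‖x0 - y0‖ ≤ 2 * r := by nlinarith [norm_nonneg (x0 - y0)]
  have key : ∀ β : ℝ, (β • x0 + (1 - β) • y0) - (1/2 : ℝ) • (x0 + y0)
      = (β - 1/2) • (x0 - y0) := by
    intro β; module
  ext x
  simp only [Set.mem_iUnion, Metric.mem_ball, dist_eq_norm, Set.mem_Ioo]
  constructor
  · rintro ⟨β, ⟨hβ0, hβh⟩, hx⟩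
    have h1 : ‖x - (1/2:ℝ) • (x0+y0)‖ ≤ ‖x - (β • x0 + (1-β) • y0)‖
        + ‖(β • x0 + (1-β) • y0) - (1/2:ℝ) • (x0+y0)‖ :=
      norm_sub_le_norm_sub_add_norm_sub _ _ _
    have h2 : ‖(β • x0 + (1-β) • y0) - (1/2:ℝ) • (x0+y0)‖
        = (1/2 - β) * ‖x0 - y0‖ := by
      rw [key, norm_smul, Real.norm_eq_abs, abs_of_nonpos (by linarith)]; ring
    have h3 : (1/2 - β) * ‖x0 - y0‖ ≤ (1/2 - β) * (2*r) :=
      mul_le_mul_of_nonneg_left hd2 (by linarith)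
    linarith
  · intro hx
    set N := ‖x - (1/2:ℝ) • (x0 + y0)‖ with hN
    have hN0 : 0 ≤ N := norm_nonneg _
    refine ⟨(N + 3*r)/(8*r), ⟨by positivity, by rw [div_lt_div_iff₀ (by positivity) (by norm_num)]; linarith⟩, ?_⟩
    set β := (N + 3*r)/(8*r) with hβ
    have hβr : β * r = (N + 3*r)/8 := by
      rw [hβ]; field_simp
    have hβlt : β < 1/2 := by rw [hβ, div_lt_div_iff₀ (by positivity) (by norm_num)]; linarith
    have h1 : ‖x - (β • x0 + (1-β) • y0)‖ ≤ N
        + ‖((1/2:ℝ) • (x0+y0)) - (β • x0 + (1-β) • y0)‖ :=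
      norm_sub_le_norm_sub_add_norm_sub _ _ _
    have h2 : ‖((1/2:ℝ) • (x0+y0)) - (β • x0 + (1-β) • y0)‖
        = (1/2 - β) * ‖x0 - y0‖ := by
      rw [← norm_neg, neg_sub, key, norm_smul, Real.norm_eq_abs,
        abs_of_nonpos (by linarith)]; ring
    have h3 : (1/2 - β) * ‖x0 - y0‖ ≤ (1/2 - β) * (2*r) :=
      mul_le_mul_of_nonneg_left hd2 (by linarith)
    have : N + (1/2 - β) * (2*r) < 2 * β * r := by nlinarith
    linarith
end

section
/- Let L₁, …, L_n : ℝ → ℝ be convex differentiable 1-smooth functions, A an n×m real matrix with rows a_j, and λ ≥ 0. For ω₀ ∈ ℝᵐ define x₀ ∈ ℝⁿ by [x₀]_j = L_j'(⟨a_j, ω₀⟩), g(ω₀) = Σ_j L_j(⟨a_j, ω₀⟩) + λ‖ω₀‖₁, and f₀(x) = ½‖x − x₀‖² − g(ω₀). Define f(x) = Σ_j L_j*(x_j) + Σ_{i=1}^m φ_i(x), where L_j* is the convex conjugate of L_j and φ_i(x) = 0 if |⟨A_i, x⟩| ≤ λ and +∞ otherwise (A_i is the i-th column of A). Then f₀(x)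 ≤ f(x) for all x ∈ ℝⁿ. -/
open scoped BigOperators

private lemma smooth_upper (L : ℝ → ℝ) (hdiff : Differentiable ℝ L)
    (hsm : LipschitzWith 1 (deriv L)) (u t : ℝ) :
    L (u + t) ≤ L u + deriv L u * t + t ^ 2 / 2 := by
  set F : ℝ → ℝ := fun t => L u + deriv L u * t + t ^ 2 / 2 - L (u + t) with hF
  have hder : ∀ s : ℝ, HasDerivAt F (deriv L u + s - deriv L (u + s)) s := by
    intro s
    have h1 : HasDerivAt (fun s : ℝ => L u + deriv L u * s + s ^ 2 / 2)
        (deriv L u + s) s := by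
      have ha : HasDerivAt (fun s : ℝ => deriv L u * s) (deriv L u) s :=
        by simpa using (hasDerivAt_id s).const_mul (deriv L u)
      have hb : HasDerivAt (fun s : ℝ => s ^ 2 / 2) s s := by
        have := (hasDerivAt_pow 2 s).div_const 2
        simpa using this
      exact ((ha.const_add (L u)).add hb)
    have h2 : HasDerivAt (fun s : ℝ => L (u + s)) (deriv L (u + s)) s := by
      have hin : HasDerivAt (fun s : ℝ => u + s) 1 s := by
        simpa using (hasDerivAt_id s).const_add u
      have := ((hdiff (u + s)).hasDerivAt).comp s hin; rw [mul_one] at this; exact this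
    exact h1.sub h2
  have hlip : ∀ a b : ℝ, |deriv L a - deriv L b| ≤ |a - b| := by
    intro a b
    have := hsm.dist_le_mul a b
    simpa [Real.dist_eq] using this
  have hFcont : Continuous F := by
    have : Differentiable ℝ F := fun s => (hder s).differentiableAt
    exact this.continuous
  have hF0 : F 0 = 0 := by simp [hF]
  have key : 0 ≤ F t := by
    rcases le_total 0 t with h | h
    · have mono : MonotoneOn F (Set.Ici (0:ℝ)) := by
        apply monotoneOn_of_deriv_nonneg (convex_Ici 0) hFcont.continuousOn
        · intro s hs
          exact (hder s).differentiableAt.differentiableWithinAt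
        · intro s hs
          rw [(hder s).deriv]
          have hs0 : 0 < s := by simpa using hs
          have := hlip (u + s) u
          have h2 : deriv L (u + s) - deriv L u ≤ s := by
            calc deriv L (u + s) - deriv L u ≤ |deriv L (u+s) - deriv L u| := le_abs_self _
              _ ≤ |(u + s) - u| := this
              _ = s := by rw [add_sub_cancel_left, abs_of_pos hs0]
          linarith
      have := mono (Set.self_mem_Ici) (Set.mem_Ici.mpr h) h
      simpa [hF0] using this
    · have anti : AntitoneOn F (Set.Iic (0:ℝ)) := by
        apply antitoneOn_of_deriv_nonpos (convex_Iic 0) hFcont.continuousOn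
        · intro s hs
          exact (hder s).differentiableAt.differentiableWithinAt
        · intro s hs
          rw [(hder s).deriv]
          have hs0 : s < 0 := by simpa using hs
          have := hlip (u + s) u
          have h2 : deriv L u - deriv L (u + s) ≤ -s := by
            calc deriv L u - deriv L (u + s) ≤ |deriv L (u+s) - deriv L u| := by
                  rw [abs_sub_comm]; exact le_abs_self _
              _ ≤ |(u + s) - u| := this
              _ = -s := by rw [add_sub_cancel_left, abs_of_neg hs0]
          linarith
      have := anti (Set.mem_Iic.mpr h) (Set.self_mem_Iic) h
      simpa [hF0] using this
  simpa [hF] using key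

private lemma ecoe_sum {α : Type*} (s : Finset α) (f : α → ℝ) :
    ((∑ j ∈ s, f j : ℝ) : EReal) = ∑ j ∈ s, ((f j : ℝ) : EReal) :=
  map_sum (⟨⟨Real.toEReal, EReal.coe_zero⟩, EReal.coe_add⟩ : ℝ →+ EReal) f s

/-- f₀ lower bounds the dual objective of ℓ1-regularized smooth loss minimization. -/
theorem stmt_10 {n m : ℕ} (L : Fin n → ℝ → ℝ) (A : Matrix (Fin n) (Fin m) ℝ) (lam : ℝ)
    (hlam : 0 ≤ lam)
    (hconv : ∀ j, ConvexOn ℝ Set.univ (L j))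
    (hdiff : ∀ j, Differentiable ℝ (L j))
    (hsmooth : ∀ j, LipschitzWith 1 (deriv (L j)))
    (ω0 : Fin m → ℝ)
    (x0 : Fin n → ℝ) (hx0 : ∀ j, x0 j = deriv (L j) (A.mulVec ω0 j))
    (g : ℝ) (hg : g = ∑ j, L j (A.mulVec ω0 j) + lam * ∑ i, |ω0 i|)
    (Lstar : Fin n → ℝ → EReal)
    (hLstar : ∀ j s, Lstar j s = ⨆ u : ℝ, ((s * u - L j u : ℝ) : EReal))
    (φ : Fin m → (Fin n → ℝ) → EReal)
    (hφ : ∀ i x, φ i x = if |∑ j, A j i * x j| ≤ lam then (0 : EReal) else ⊤) :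
    ∀ x : Fin n → ℝ,
      ((1/2 * ∑ j, (x j - x0 j)^2 - g : ℝ) : EReal)
        ≤ ∑ j, Lstar j (x j) + ∑ i, φ i x := by
  intro x
  set u : Fin n → ℝ := fun j => A.mulVec ω0 j with hu
  set c : Fin n → ℝ := fun j => x j * u j - L j (u j) + (x j - x0 j) ^ 2 / 2 with hc
  have hL : ∀ j, ((c j : ℝ) : EReal) ≤ Lstar j (x j) := by
    intro j
    rw [hLstar]
    refine le_trans ?_ (le_iSup _ (u j + (x j - x0 j)))
    rw [EReal.coe_le_coe_iff]
    have hs := smooth_upper (L j) (hdiff j) (hsmooth j) (u j) (x j - x0 j)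
    have hx0j : x0 j = deriv (L j) (u j) := hx0 j
    rw [← hx0j] at hs
    simp only [hc]
    have hring : x j * u j - L j (u j) + (x j - x0 j) ^ 2 / 2
        = x j * (u j + (x j - x0 j))
          - (L j (u j) + x0 j * (x j - x0 j) + (x j - x0 j) ^ 2 / 2) := by ring
    linarith
  have hsumL : ((∑ j, c j : ℝ) : EReal) ≤ ∑ j, Lstar j (x j) := by
    rw [ecoe_sum]
    exact Finset.sum_le_sum fun j _ => hL j
  by_cases hall : ∀ i, |∑ j, A j i * x j| ≤ lam
  · have hφ0 : ∀ i, φ i x = 0 := fun i => by rw [hφ, if_pos (hall i)]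
    have hsumφ : ∑ i, φ i x = 0 := by simp [hφ0]
    rw [hsumφ, add_zero]
    refine le_trans ?_ hsumL
    rw [EReal.coe_le_coe_iff]
    have key : -(lam * ∑ i, |ω0 i|) ≤ ∑ j, x j * u j := by
      have hswap : ∑ j, x j * u j = ∑ i, ω0 i * ∑ j, A j i * x j := by
        simp only [hu, Matrix.mulVec, dotProduct, Finset.mul_sum]
        rw [Finset.sum_comm]
        exact Finset.sum_congr rfl fun i _ => Finset.sum_congr rfl fun j _ => by ring
      have h1 : -(lam * ∑ i, |ω0 i|) = ∑ i, -(|ω0 i| * lam) := by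
        rw [Finset.mul_sum, ← Finset.sum_neg_distrib]
        exact Finset.sum_congr rfl fun i _ => by ring
      rw [hswap, h1]
      refine Finset.sum_le_sum fun i _ => ?_
      have h2 : |ω0 i * (∑ j, A j i * x j)| ≤ |ω0 i| * lam := by
        rw [abs_mul]; exact mul_le_mul_of_nonneg_left (hall i) (abs_nonneg _)
      linarith [neg_abs_le (ω0 i * ∑ j, A j i * x j)]
    have hcsum : ∑ j, c j = ∑ j, (x j * u j - L j (u j)) + ∑ j, (x j - x0 j) ^ 2 / 2 := by
      rw [← Finset.sum_add_distrib]
    rw [hg, hcsum, Finset.sum_sub_distrib]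
    have : ∑ j, (x j - x0 j) ^ 2 / 2 = 1/2 * ∑ j, (x j - x0 j) ^ 2 := by
      rw [Finset.mul_sum]; congr 1; ext j; ring
    linarith [key]
  · push_neg at hall
    obtain ⟨i0, hi0⟩ := hall
    have hφtop : φ i0 x = ⊤ := by rw [hφ, if_neg (not_le.mpr hi0)]
    have hφnn : ∀ i ∈ Finset.univ, (0 : EReal) ≤ φ i x := by
      intro i _; rw [hφ]; split <;> simp
    have hsumφ : ∑ i, φ i x = ⊤ := by
      refine top_le_iff.mp ?_
      calc (⊤ : EReal) = φ i0 x := hφtop.symm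
        _ ≤ ∑ i, φ i x := Finset.single_le_sum hφnn (Finset.mem_univ i0)
    have hne : ∑ j, Lstar j (x j) ≠ ⊥ :=
      fun h => by simp [h] at hsumL
    rw [hsumφ, EReal.add_top_of_ne_bot hne]
    exact le_top
end
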